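/- Let s ≥ 1 be an integer, let Δ ∈ (0, 1/6], let φ = min(2π/s, π/3), let a = 2Δ·(cos(π/s), sin(π/s)), let H^(1) = H(a, (1,0), φ, Δ), and for i = 1, …, s let H^(i) be the image of H^(1) under rotation about the origin by (i−1)·2π/s. Then the sets H^(1), …, H^(s) are pairwise disjoint. -/

import Mathlib

open Real Set

/-- Map an angle in `(-π, π]` (as returned by `Complex.arg`) to `[0, 2π)`. -/
noncomputable def toCCW (θ : ℝ) : ℝ := if 0 ≤ θ then θ else θ + 2 * Real.pi

/-- The counterclockwise angle from `w` to `z` (as vectors in `ℝ² = ℂ`), in `[0, 2π)`. -/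
noncomputable def ccwAngle (w z : ℂ) : ℝ := toCCW ((z / w).arg)

/-- The drawing hull `H(a, d, φ, Δ)`: all points within distance `Δ` of the anchor `a`
whose counterclockwise angle (measured from direction `d`) lies in `[0, φ)`,
together with the anchor itself. -/
noncomputable def dhull (a d : ℂ) (φ Δ : ℝ) : Set ℂ :=
  {a} ∪ {x : ℂ | dist x a ≤ Δ ∧ ccwAngle d (x - a) ∈ Set.Ico 0 φ}

/-- Rotation of `ℝ² = ℂ` about the origin by angle `θ` (counterclockwise). -/
noncomputable def drot (θ : ℝ) (z : ℂ) : ℂ := Complex.exp ((θ : ℂ) * Complex.I) * z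

lemma im_mul_exp_aux (z : ℂ) (t : ℝ) :
    (z * Complex.exp ((t : ℝ) * Complex.I)).im
      = ‖z‖ * Real.sin (Complex.arg z + t) := by
  conv_lhs => rw [← Complex.norm_mul_exp_arg_mul_I z]
  rw [mul_assoc, ← Complex.exp_add]
  have : (Complex.arg z : ℂ) * Complex.I + (t : ℝ) * Complex.I
      = ((Complex.arg z + t : ℝ) : ℂ) * Complex.I := by push_cast; ring
  rw [this, Complex.im_ofReal_mul, Complex.exp_ofReal_mul_I_im]

lemma hull_arg (s : ℕ) (hs : 2 ≤ s) (Δ : ℝ)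
    (hΔ : Δ ∈ Set.Ioc (0 : ℝ) (1 / 6))
    (φ : ℝ) (hφ : φ = min (2 * π / s) (π / 3))
    (a : ℂ) (ha : a = (⟨2 * Δ * Real.cos (π / s), 2 * Δ * Real.sin (π / s)⟩ : ℂ))
    (x : ℂ) (hx : x ∈ dhull a 1 φ Δ) :
    x ≠ 0 ∧ Complex.arg x ∈ Set.Ioo 0 (2 * π / s) := by
  have hs' : (2 : ℝ) ≤ s := by exact_mod_cast hs
  have hspos : (0 : ℝ) < s := by linarith
  set β : ℝ := π / s with hβ
  have hβpos : 0 < β := div_pos pi_pos hspos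
  have hβle : β ≤ π / 2 := by
    rw [hβ, div_le_div_iff₀ hspos two_pos]
    nlinarith [pi_pos]
  have hβltpi : β < π := by linarith [pi_pos]
  have hsinβ : 0 < Real.sin β := Real.sin_pos_of_pos_of_lt_pi hβpos hβltpi
  have hΔpos : 0 < Δ := hΔ.1
  have haim : a.im = 2 * Δ * Real.sin β := by rw [ha]
  have hare : a.re = 2 * Δ * Real.cos β := by rw [ha]
  have hφle : φ ≤ π / 3 := hφ ▸ min_le_right _ _
  have hφle2 : φ ≤ 2 * π / s := hφ ▸ min_le_left _ _
  have harga : Complex.arg a = β := by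
    have ha' : a = ((2 * Δ : ℝ) : ℂ) * Complex.exp (β * Complex.I) := by
      apply Complex.ext <;>
        simp [hare, haim, Complex.exp_ofReal_mul_I_re, Complex.exp_ofReal_mul_I_im,
          Complex.im_ofReal_mul, Complex.re_ofReal_mul]
    rw [ha', Complex.arg_real_mul _ (by linarith : (0:ℝ) < 2 * Δ),
      Complex.exp_mul_I,
      Complex.arg_cos_add_sin_mul_I ⟨by linarith, by linarith⟩]
  have haimpos : 0 < a.im := by rw [haim]; nlinarith
  have hane : a ≠ 0 := by
    intro h; rw [h] at haimpos; simp at haimpos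
  have hacase : a ≠ 0 ∧ Complex.arg a ∈ Set.Ioo 0 (2 * π / s) := by
    refine ⟨hane, ?_⟩
    rw [harga]
    constructor
    · exact hβpos
    · rw [hβ]; rw [div_lt_div_iff₀ hspos hspos]; nlinarith [pi_pos]
  rcases hx with h | ⟨hd, hccw⟩
  · rw [Set.mem_singleton_iff] at h; rw [h]; exact hacase
  · set v : ℂ := x - a with hv
    rcases eq_or_ne v 0 with hv0 | hv0
    · have : x = a := by
        have : x - a = 0 := hv0
        linear_combination this
      rw [this]; exact hacase
    have hvabs : ‖v‖ ≤ Δ := by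
      rw [Complex.dist_eq] at hd; exact hd
    have hvabspos : 0 < ‖v‖ := by
      simpa using (norm_pos_iff.mpr hv0)
    -- the ccw angle condition gives arg v ∈ [0, φ)
    have hccw' : toCCW (Complex.arg v) ∈ Set.Ico 0 φ := by
      have : (x - a) / 1 = v := by rw [div_one]
      simpa [ccwAngle, this] using hccw
    have hargv : Complex.arg v ∈ Set.Ico 0 φ := by
      by_cases h0 : 0 ≤ Complex.arg v
      · simpa [toCCW, h0] using hccw'
      · exfalso
        have hgt : -π < Complex.arg v := Complex.neg_pi_lt_arg v
        have : Complex.arg v + 2 * π < φ := by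
          have := hccw'.2
          simpa [toCCW, h0] using this
        have : Complex.arg v + 2 * π < π / 3 := lt_of_lt_of_le this hφle
        linarith [pi_pos]
    have hargvlt : Complex.arg v < φ := hargv.2
    have hargvge : 0 ≤ Complex.arg v := hargv.1
    have hargvltpi : Complex.arg v ≤ π := Complex.arg_le_pi v
    -- v.im ≥ 0
    have hsinv : 0 ≤ Real.sin (Complex.arg v) :=
      Real.sin_nonneg_of_nonneg_of_le_pi hargvge hargvltpi
    have hvim : 0 ≤ v.im := by
      have := Complex.sin_arg v
      have h2 : v.im = Real.sin (Complex.arg v) * ‖v‖ := by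
        rw [this, div_mul_cancel₀ _ hvabspos.ne']
      rw [h2]; positivity
    have hxim : 0 < x.im := by
      have : x = a + v := by rw [hv]; ring
      rw [this, Complex.add_im, haim]
      nlinarith
    have hxne : x ≠ 0 := by
      intro h; rw [h] at hxim; simp at hxim
    have hxabspos : 0 < ‖x‖ := by simpa using norm_pos_iff.mpr hxne
    have hargxpos : 0 < Complex.arg x := by
      by_contra h
      push_neg at h
      have h1 : Real.sin (Complex.arg x) ≤ 0 :=
        Real.sin_nonpos_of_nonpos_of_neg_pi_le h (Complex.neg_pi_lt_arg x).le
      rw [Complex.sin_arg] at h1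
      have : x.im ≤ 0 := by
        have := mul_nonpos_of_nonpos_of_nonneg h1 hxabspos.le
        rw [div_mul_cancel₀] at this
        · exact this
        · exact hxabspos.ne'
      linarith
    have hargxltpi : Complex.arg x < π := by
      rcases lt_or_eq_of_le (Complex.arg_le_pi x) with h | h
      · exact h
      · exfalso
        have := Complex.arg_eq_pi_iff.mp h
        linarith [this.2]
    refine ⟨hxne, hargxpos, ?_⟩
    rcases eq_or_lt_of_le hs with hs2 | hs3
    · -- s = 2
      have : (s : ℝ) = 2 := by exact_mod_cast hs2.symm
      rw [this]
      calc Complex.arg x < π := hargxltpi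
        _ = 2 * π / 2 := by ring
    · -- s ≥ 3
      have hs3' : (3 : ℝ) ≤ s := by exact_mod_cast hs3
      have hβle3 : β ≤ π / 3 := by
        rw [hβ, div_le_div_iff₀ hspos (by norm_num : (0:ℝ) < 3)]
        nlinarith [pi_pos]
      have h2βlt : 2 * β < π := by linarith [pi_pos]
      -- compute the imaginary part of x * exp(-(2β) I)
      have habsa : ‖a‖ = 2 * Δ := by
        have ha' : a = ((2 * Δ : ℝ) : ℂ) * Complex.exp ((β:ℝ) * Complex.I) := by
          apply Complex.ext <;>
            simp [hare, haim, Complex.exp_ofReal_mul_I_re, Complex.exp_ofReal_mul_I_im,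
              Complex.im_ofReal_mul, Complex.re_ofReal_mul]
        rw [ha', norm_mul, Complex.norm_real, Real.norm_eq_abs, Complex.norm_exp_ofReal_mul_I,
          abs_of_pos (by linarith : (0:ℝ) < 2 * Δ), mul_one]
      have him_a : (a * Complex.exp ((-(2*β) : ℝ) * Complex.I)).im
          = -(2 * Δ * Real.sin β) := by
        rw [im_mul_exp_aux, harga, habsa,
          show β + -(2*β) = -β by ring, Real.sin_neg]
        ring
      have him_v : (v * Complex.exp ((-(2*β) : ℝ) * Complex.I)).im ≤ 0 := by
        rw [im_mul_exp_aux]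
        have hsin : Real.sin (Complex.arg v + -(2*β)) ≤ 0 := by
          apply Real.sin_nonpos_of_nonpos_of_neg_pi_le
          · have : φ ≤ 2 * β := by
              rw [hβ]
              calc φ ≤ 2 * π / s := hφle2
                _ = 2 * (π / s) := by ring
            linarith
          · linarith
        exact mul_nonpos_of_nonneg_of_nonpos (norm_nonneg v) hsin
      have him_x : (x * Complex.exp ((-(2*β) : ℝ) * Complex.I)).im < 0 := by
        have hxav : x = a + v := by rw [hv]; ring
        rw [hxav, add_mul, Complex.add_im, him_a]
        have hpos : 0 < 2 * Δ * Real.sin β := by positivity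
        linarith [him_v]
      -- on the other hand, its imaginary part is |x| sin(arg x - 2β)
      have him_x' : (x * Complex.exp ((-(2*β) : ℝ) * Complex.I)).im
          = ‖x‖ * Real.sin (Complex.arg x - 2*β) := by
        rw [im_mul_exp_aux, show Complex.arg x + -(2*β) = Complex.arg x - 2*β by ring]
      rw [him_x'] at him_x
      have hsinneg : Real.sin (Complex.arg x - 2*β) < 0 := by
        by_contra h
        push_neg at h
        have := mul_nonneg hxabspos.le h
        linarith
      have : Complex.arg x < 2 * β := by
        by_contra h
        push_neg at h
        have : 0 ≤ Real.sin (Complex.arg x - 2*β) := by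
          apply Real.sin_nonneg_of_nonneg_of_le_pi
          · linarith
          · linarith [Complex.arg_le_pi x]
        linarith
      calc Complex.arg x < 2 * β := this
        _ = 2 * π / s := by rw [hβ]; ring

theorem initial_hulls_disjoint (s : ℕ) (hs : 1 ≤ s) (Δ : ℝ)
    (hΔ : Δ ∈ Set.Ioc (0 : ℝ) (1 / 6))
    (φ : ℝ) (hφ : φ = min (2 * π / s) (π / 3))
    (a : ℂ) (ha : a = (⟨2 * Δ * Real.cos (π / s), 2 * Δ * Real.sin (π / s)⟩ : ℂ)) :
    ∀ i ∈ Finset.Icc 1 s, ∀ j ∈ Finset.Icc 1 s, i ≠ j →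
      (drot (((i : ℝ) - 1) * (2 * π / s)) '' dhull a 1 φ Δ) ∩
        (drot (((j : ℝ) - 1) * (2 * π / s)) '' dhull a 1 φ Δ) = ∅ := by
  intro i hi j hj hij
  simp only [Finset.mem_Icc] at hi hj
  rcases eq_or_lt_of_le hs with hs1 | hs2
  · exfalso; omega
  · have hs2 : 2 ≤ s := hs2
    have hspos : (0 : ℝ) < s := by positivity
    rw [Set.eq_empty_iff_forall_notMem]
    rintro z ⟨⟨x, hx, hxz⟩, ⟨y, hy, hyz⟩⟩
    obtain ⟨hx0, hxa⟩ := hull_arg s hs2 Δ hΔ φ hφ a ha x hx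
    obtain ⟨hy0, hya⟩ := hull_arg s hs2 Δ hΔ φ hφ a ha y hy
    set α : ℝ := 2 * π / s with hα
    have hαpos : 0 < α := by rw [hα]; positivity
    set θi : ℝ := ((i : ℝ) - 1) * α with hθi
    set θj : ℝ := ((j : ℝ) - 1) * α with hθj
    have heq : Complex.exp ((θi : ℂ) * Complex.I) * x
        = Complex.exp ((θj : ℂ) * Complex.I) * y := by
      have : drot θi x = drot θj y := by rw [hxz, hyz]
      simpa [drot] using this
    have h1 : Complex.exp ((↑(θi + Complex.arg x)) * Complex.I) * (‖x‖ : ℂ)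
        = Complex.exp ((↑(θj + Complex.arg y)) * Complex.I) * (‖y‖ : ℂ) := by
      have e1 : Complex.exp ((↑(θi + Complex.arg x)) * Complex.I) * (‖x‖ : ℂ)
          = Complex.exp ((θi : ℂ) * Complex.I) * x := by
        conv_rhs => rw [← Complex.norm_mul_exp_arg_mul_I x]
        rw [Complex.ofReal_add, add_mul, Complex.exp_add]
        ring
      have e2 : Complex.exp ((↑(θj + Complex.arg y)) * Complex.I) * (‖y‖ : ℂ)
          = Complex.exp ((θj : ℂ) * Complex.I) * y := by
        conv_rhs => rw [← Complex.norm_mul_exp_arg_mul_I y]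
        rw [Complex.ofReal_add, add_mul, Complex.exp_add]
        ring
      rw [e1, e2, heq]
    have habsx : ‖x‖ ≠ 0 := by
      simpa using (norm_ne_zero_iff.mpr hx0)
    have habsxy : ‖x‖ = ‖y‖ := by
      have := congrArg (‖·‖) heq
      simpa [norm_mul, Complex.norm_exp_ofReal_mul_I] using this
    have h2 : Complex.exp ((↑(θi + Complex.arg x)) * Complex.I)
        = Complex.exp ((↑(θj + Complex.arg y)) * Complex.I) := by
      rw [habsxy] at h1
      have habsy : (‖y‖ : ℂ) ≠ 0 := by
        rw [← habsxy]; exact_mod_cast habsx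
      exact mul_right_cancel₀ habsy h1
    rw [Complex.exp_eq_exp_iff_exists_int] at h2
    obtain ⟨n, hn⟩ := h2
    have hn' : θi + Complex.arg x = θj + Complex.arg y + n * (2 * π) := by
      have := congrArg Complex.im hn
      simpa [Complex.im_ofReal_mul, Complex.add_im, Complex.mul_im] using this
    have h2pi : 2 * π = (s : ℝ) * α := by
      rw [hα]; field_simp
    have key : Complex.arg x - Complex.arg y
        = (((j : ℤ) - (i : ℤ) + (s : ℤ) * n : ℤ) : ℝ) * α := by
      push_cast
      rw [hθi, hθj] at hn'
      rw [h2pi] at hn'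
      ring_nf
      ring_nf at hn'
      linarith
    have hdiff : |Complex.arg x - Complex.arg y| < α := by
      rw [abs_lt]
      constructor
      · linarith [hxa.1, hya.2]
      · linarith [hxa.2, hya.1]
    rw [key] at hdiff
    rw [abs_mul, abs_of_pos hαpos] at hdiff
    have hKlt : |(((j : ℤ) - (i : ℤ) + (s : ℤ) * n : ℤ) : ℝ)| < 1 := by
      by_contra h
      push_neg at h
      have := mul_le_mul_of_nonneg_right h hαpos.le
      rw [one_mul] at this
      linarith
    have hK0 : ((j : ℤ) - (i : ℤ) + (s : ℤ) * n : ℤ) = 0 := by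
      have : |((j : ℤ) - (i : ℤ) + (s : ℤ) * n : ℤ)| < 1 := by
        exact_mod_cast (by rwa [← Int.cast_abs] at hKlt :
          ((|((j : ℤ) - (i : ℤ) + (s : ℤ) * n : ℤ)| : ℤ) : ℝ) < 1)
      exact Int.abs_lt_one_iff.mp this
    -- now derive a contradiction
    have hn0 : n ≠ 0 := by
      rintro rfl
      simp at hK0
      omega
    have h1n : (1 : ℤ) ≤ |n| := Int.one_le_abs hn0
    have hsnonneg : (0 : ℤ) ≤ (s : ℤ) := by positivity
    have hsn : (s : ℤ) ≤ (s : ℤ) * |n| := le_mul_of_one_le_right hsnonneg h1n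
    have hKey : (s : ℤ) * |n| = |(j : ℤ) - (i : ℤ)| := by
      have hsn' : (s : ℤ) * n = (i : ℤ) - (j : ℤ) := by linarith [hK0]
      calc (s : ℤ) * |n| = |(s : ℤ) * n| := by
            rw [abs_mul, abs_of_nonneg hsnonneg]
        _ = |(i : ℤ) - (j : ℤ)| := by rw [hsn']
        _ = |(j : ℤ) - (i : ℤ)| := abs_sub_comm _ _
    have hijbound : |(j : ℤ) - (i : ℤ)| < s := by
      rw [abs_lt]; omega
    linarith [hKey ▸ hsn, hijbound]
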